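/- Let (Q_k^σ) be bounded real sequences indexed by a finite set σ ∈ I, each satisfying Q_{k+1}^σ = Q_k^σ + β_k Υ_k^σ with β_k ≥ 0 and liminf_{k₁→∞} inf_{k₂≥k₁} ∑_{k=k₁}^{k₂} β_k Υ_k^σ ≥ 0 for every σ. Then for each σ there exists Q_*^σ with Q_k^σ → Q_*^σ as k → ∞. -/

import Mathlib

open Finset Filter

private lemma sum_key (Q Υ β : ℕ → ℝ)
    (hrec : ∀ k, Q (k + 1) = Q k + β k * Υ k) :
    ∀ k₂ k₁, k₁ ≤ k₂ → Q (k₂ + 1) = Q k₁ + ∑ k ∈ Icc k₁ k₂, β k * Υ k := by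
  intro k₂
  induction k₂ with
  | zero =>
    intro k₁ h
    interval_cases k₁
    simp [hrec 0]
  | succ n ih =>
    intro k₁ h
    rcases Nat.lt_or_ge k₁ (n + 1) with h' | h'
    · have hk : k₁ ≤ n := Nat.lt_succ_iff.mp h'
      rw [hrec (n + 1), ih k₁ hk, Finset.sum_Icc_succ_top (by omega : k₁ ≤ n + 1)]
      ring
    · have : k₁ = n + 1 := le_antisymm h h'
      subst this
      simp [hrec (n + 1)]

theorem bounded_asymptotic_monotone_convergence_indexed
    (I : Type*) [Fintype I] [Nonempty I]
    (Q Υ : I → ℕ → ℝ) (β : ℕ → ℝ)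
    (hbdd : ∀ σ : I, ∃ C : ℝ, ∀ k, |Q σ k| ≤ C)
    (hβ : ∀ k, 0 ≤ β k)
    (hrec : ∀ σ : I, ∀ k, Q σ (k + 1) = Q σ k + β k * Υ σ k)
    (hliminf : ∀ σ : I, ∀ ε > (0 : ℝ), ∃ K : ℕ, ∀ k₁ ≥ K, ∀ k₂ ≥ k₁,
      (-ε : ℝ) ≤ ∑ k ∈ Icc k₁ k₂, β k * Υ σ k) :
    ∀ σ : I, ∃ Qstar : ℝ, Tendsto (Q σ) atTop (nhds Qstar) := by
  intro σ
  obtain ⟨C, hC⟩ := hbdd σ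
  have hbd_le : IsBoundedUnder (· ≤ ·) atTop (Q σ) :=
    isBoundedUnder_of ⟨C, fun k => (abs_le.mp (hC k)).2⟩
  have hbd_ge : IsBoundedUnder (· ≥ ·) atTop (Q σ) :=
    isBoundedUnder_of ⟨-C, fun k => (abs_le.mp (hC k)).1⟩
  set L := limsup (Q σ) atTop with hL
  refine ⟨L, ?_⟩
  rw [Metric.tendsto_atTop]
  intro ε hε
  obtain ⟨K, hK⟩ := hliminf σ (ε / 3) (by linarith)
  -- eventually Q σ n < L + ε/3
  have hev : ∀ᶠ n in atTop, Q σ n < L + ε / 3 :=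
    eventually_lt_of_limsup_lt (by linarith [hL]) hbd_le
  obtain ⟨N₁, hN₁⟩ := eventually_atTop.mp hev
  -- frequently Q σ n > L - ε/3
  have hfreq : ∃ᶠ n in atTop, L - ε / 3 < Q σ n :=
    frequently_lt_of_lt_limsup hbd_ge.isCoboundedUnder_le (by linarith)
  obtain ⟨m, hm, hmQ⟩ := (frequently_atTop.mp hfreq) (max K N₁)
  refine ⟨m, fun n hn => ?_⟩
  have hupper : Q σ n < L + ε / 3 := hN₁ n (le_trans (le_trans (le_max_right K N₁) hm) hn)
  have hlower : L - 2 * ε / 3 < Q σ n := by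
    rcases Nat.eq_or_lt_of_le hn with h | h
    · subst h; linarith
    · obtain ⟨p, rfl⟩ : ∃ p, n = p + 1 := ⟨n - 1, by omega⟩
      have hmp : m ≤ p := by omega
      have := sum_key (Q σ) (Υ σ) β (hrec σ) p m hmp
      have hsum := hK m (le_trans (le_max_left K N₁) hm) p hmp
      linarith
  rw [Real.dist_eq, abs_lt]
  constructor <;> linarith
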